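/- Let 0 < r < 1, C > 0, and c ∈ ℝ, and define F(h) = log( (√((1 − r²)h² + r²) + 1) / √(h² − 1) ) − C·√((1 − r²)h² + r²). Then the set { h ∈ (1, ∞) : F(h) = c } contains at most one element. -/

import Mathlib

open Real Set

private lemma F2_hasDerivAt (r C : ℝ) (hr0 : 0 < r) (hr1 : r < 1) (x : ℝ) (hx : 1 < x) :
    HasDerivAt (fun h : ℝ => Real.log (Real.sqrt ((1 - r ^ 2) * h ^ 2 + r ^ 2) + 1)
        - Real.log (Real.sqrt (h ^ 2 - 1)) - C * Real.sqrt ((1 - r ^ 2) * h ^ 2 + r ^ 2))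
      (((1 - r ^ 2) * x / Real.sqrt ((1 - r ^ 2) * x ^ 2 + r ^ 2)) /
          (Real.sqrt ((1 - r ^ 2) * x ^ 2 + r ^ 2) + 1)
        - x / (x ^ 2 - 1)
        - C * ((1 - r ^ 2) * x / Real.sqrt ((1 - r ^ 2) * x ^ 2 + r ^ 2))) x := by
  have hx0 : 0 < x := lt_trans one_pos hx
  have hr2 : 0 < 1 - r ^ 2 := by nlinarith
  have hux : 0 < (1 - r ^ 2) * x ^ 2 + r ^ 2 := by positivity
  have hvx : 0 < x ^ 2 - 1 := by nlinarith
  set s := Real.sqrt ((1 - r ^ 2) * x ^ 2 + r ^ 2) with hs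
  set t := Real.sqrt (x ^ 2 - 1) with ht
  have hs0 : 0 < s := Real.sqrt_pos.mpr hux
  have ht0 : 0 < t := Real.sqrt_pos.mpr hvx
  have hu : HasDerivAt (fun h : ℝ => (1 - r ^ 2) * h ^ 2 + r ^ 2) (2 * (1 - r ^ 2) * x) x := by
    have := ((hasDerivAt_pow 2 x).const_mul (1 - r ^ 2)).add_const (r ^ 2)
    refine this.congr_deriv ?_
    ring
  have hgs : HasDerivAt (fun h : ℝ => Real.sqrt ((1 - r ^ 2) * h ^ 2 + r ^ 2))
      ((1 - r ^ 2) * x / s) x := by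
    have := (Real.hasDerivAt_sqrt (ne_of_gt hux)).comp x hu
    refine this.congr_deriv ?_
    field_simp
    ring
  have hv : HasDerivAt (fun h : ℝ => h ^ 2 - 1) (2 * x) x := by
    have := (hasDerivAt_pow 2 x).sub_const 1
    refine this.congr_deriv ?_
    ring
  have hgt : HasDerivAt (fun h : ℝ => Real.sqrt (h ^ 2 - 1)) (x / t) x := by
    have := (Real.hasDerivAt_sqrt (ne_of_gt hvx)).comp x hv
    refine this.congr_deriv ?_
    field_simp
    ring
  have hlog1 : HasDerivAt (fun h : ℝ => Real.log (Real.sqrt ((1 - r ^ 2) * h ^ 2 + r ^ 2) + 1))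
      (((1 - r ^ 2) * x / s) / (s + 1)) x := by
    have := (Real.hasDerivAt_log (ne_of_gt (by linarith : (0:ℝ) < s + 1))).comp x
      (hgs.add_const 1)
    refine this.congr_deriv ?_
    field_simp
  have hlog2 : HasDerivAt (fun h : ℝ => Real.log (Real.sqrt (h ^ 2 - 1)))
      (x / (x ^ 2 - 1)) x := by
    have := (Real.hasDerivAt_log (ne_of_gt ht0)).comp x hgt
    refine this.congr_deriv ?_
    have ht2 : t * t = x ^ 2 - 1 := Real.mul_self_sqrt (le_of_lt hvx)
    rw [← ht2]
    field_simp
  exact (hlog1.sub hlog2).sub (hgs.const_mul C)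

private lemma F2_deriv_neg (r C : ℝ) (hr0 : 0 < r) (hr1 : r < 1) (hC : 0 < C)
    (x : ℝ) (hx : 1 < x) :
    (((1 - r ^ 2) * x / Real.sqrt ((1 - r ^ 2) * x ^ 2 + r ^ 2)) /
          (Real.sqrt ((1 - r ^ 2) * x ^ 2 + r ^ 2) + 1)
        - x / (x ^ 2 - 1)
        - C * ((1 - r ^ 2) * x / Real.sqrt ((1 - r ^ 2) * x ^ 2 + r ^ 2))) < 0 := by
  have hx0 : 0 < x := lt_trans one_pos hx
  have hr2 : 0 < 1 - r ^ 2 := by nlinarith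
  have hux : 0 < (1 - r ^ 2) * x ^ 2 + r ^ 2 := by positivity
  have hvx : 0 < x ^ 2 - 1 := by nlinarith
  set s := Real.sqrt ((1 - r ^ 2) * x ^ 2 + r ^ 2) with hs
  have hs0 : 0 < s := Real.sqrt_pos.mpr hux
  have hs2 : s ^ 2 = (1 - r ^ 2) * x ^ 2 + r ^ 2 := Real.sq_sqrt (le_of_lt hux)
  have hterm3 : 0 < C * ((1 - r ^ 2) * x / s) := by positivity
  have h1 : ((1 - r ^ 2) * x / s) / (s + 1) < x / (x ^ 2 - 1) := by
    rw [div_div, div_lt_div_iff₀ (by positivity) hvx]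
    have : (1 - r ^ 2) * (x ^ 2 - 1) < s * (s + 1) := by nlinarith
    nlinarith
  linarith

private lemma F_strictAnti (r C : ℝ) (hr0 : 0 < r) (hr1 : r < 1) (hC : 0 < C) :
    StrictAntiOn (fun h : ℝ =>
      Real.log ((Real.sqrt ((1 - r ^ 2) * h ^ 2 + r ^ 2) + 1) / Real.sqrt (h ^ 2 - 1)) -
        C * Real.sqrt ((1 - r ^ 2) * h ^ 2 + r ^ 2)) (Set.Ioi 1) := by
  have hr2 : 0 < 1 - r ^ 2 := by nlinarith
  set F2 : ℝ → ℝ := fun h =>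
    Real.log (Real.sqrt ((1 - r ^ 2) * h ^ 2 + r ^ 2) + 1)
      - Real.log (Real.sqrt (h ^ 2 - 1)) - C * Real.sqrt ((1 - r ^ 2) * h ^ 2 + r ^ 2) with hF2
  have heq : ∀ h ∈ Set.Ioi (1:ℝ),
      Real.log ((Real.sqrt ((1 - r ^ 2) * h ^ 2 + r ^ 2) + 1) / Real.sqrt (h ^ 2 - 1)) -
        C * Real.sqrt ((1 - r ^ 2) * h ^ 2 + r ^ 2) = F2 h := by
    intro h hh
    simp only [Set.mem_Ioi] at hh
    have hux : 0 < (1 - r ^ 2) * h ^ 2 + r ^ 2 := by positivity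
    have hvx : 0 < h ^ 2 - 1 := by nlinarith
    have hA : Real.sqrt ((1 - r ^ 2) * h ^ 2 + r ^ 2) + 1 ≠ 0 := by positivity
    have hB : Real.sqrt (h ^ 2 - 1) ≠ 0 := ne_of_gt (Real.sqrt_pos.mpr hvx)
    rw [hF2, Real.log_div hA hB]
  have hanti : StrictAntiOn F2 (Set.Ioi 1) := by
    apply strictAntiOn_of_deriv_neg (convex_Ioi 1)
    · exact fun x hx => (F2_hasDerivAt r C hr0 hr1 x hx).continuousAt.continuousWithinAt
    · intro x hx
      rw [interior_Ioi] at hx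
      rw [(F2_hasDerivAt r C hr0 hr1 x hx).deriv]
      exact F2_deriv_neg r C hr0 hr1 hC x hx
  intro a ha b hb hab
  have h2 := hanti ha hb hab
  rw [← heq a ha, ← heq b hb] at h2
  exact h2

theorem F_eq_const_subsingleton (r C c : ℝ) (hr0 : 0 < r) (hr1 : r < 1) (hC : 0 < C) :
    {h : ℝ | h ∈ Set.Ioi (1 : ℝ) ∧
      Real.log ((Real.sqrt ((1 - r ^ 2) * h ^ 2 + r ^ 2) + 1) / Real.sqrt (h ^ 2 - 1)) -
        C * Real.sqrt ((1 - r ^ 2) * h ^ 2 + r ^ 2) = c}.Subsingleton := by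
  intro a ha b hb
  rcases lt_trichotomy a b with h | h | h
  · exfalso
    have := F_strictAnti r C hr0 hr1 hC ha.1 hb.1 h
    simp only [ha.2, hb.2] at this
    exact lt_irrefl c this
  · exact h
  · exfalso
    have := F_strictAnti r C hr0 hr1 hC hb.1 ha.1 h
    simp only [ha.2, hb.2] at this
    exact lt_irrefl c this
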